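/- Fix Σ₀ positive definite, w ≠ 0, T ∈ ℝ, and ε ∈ (0, 1/2). Let δ₀ = (T - wᵀμ₀)/sqrt(wᵀΣ₀w) and suppose δ₀ < Φ⁻¹(1-ε). Among Gaussian posteriors p = N(μ₀ + Δ, Σ₀) with mean shift Δ satisfying P_p(wᵀs ≤ T) ≥ 1-ε, the minimum of D_KL(p ‖ p₀) = (1/2)ΔᵀΣ₀⁻¹Δ equals (1/2)(Φ⁻¹(1-ε) - δ₀)², achieved by Δ* = -(Φ⁻¹(1-ε) - δ₀)·Σ₀w/sqrt(wᵀΣ₀w). -/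

import Mathlib

open MeasureTheory Real Matrix
noncomputable section

/-- Density of the multivariate Gaussian `N(m, Σ)` on `ℝ^d`. -/
def gaussDensity {d : ℕ} (m : Fin d → ℝ) (Sig : Matrix (Fin d) (Fin d) ℝ) (s : Fin d → ℝ) : ℝ :=
  (Real.sqrt ((2 * π) ^ d * Sig.det))⁻¹ *
    Real.exp (-(1 / 2) * ((s - m) ⬝ᵥ (Sig⁻¹ *ᵥ (s - m))))

/-- Standard normal cumulative distribution function. -/
def stdNormalCDF (x : ℝ) : ℝ :=
  ∫ t in Set.Iic x, (Real.sqrt (2 * π))⁻¹ * Real.exp (-t ^ 2 / 2)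

lemma psi_pos (t : ℝ) : 0 < (Real.sqrt (2 * π))⁻¹ * Real.exp (-t ^ 2 / 2) := by
  have h2π : (0:ℝ) < 2 * π := by positivity
  positivity

lemma psi_integrable : Integrable (fun t : ℝ => (Real.sqrt (2 * π))⁻¹ * Real.exp (-t ^ 2 / 2)) := by
  have : (fun t : ℝ => (Real.sqrt (2 * π))⁻¹ * Real.exp (-t ^ 2 / 2))
      = fun t : ℝ => (Real.sqrt (2 * π))⁻¹ * Real.exp (-(1/2) * t ^ 2) := by
    funext t; ring_nf
  rw [this]
  exact (integrable_exp_neg_mul_sq (by norm_num : (0:ℝ) < 1/2)).const_mul _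

lemma psi_integral : ∫ t : ℝ, (Real.sqrt (2 * π))⁻¹ * Real.exp (-t ^ 2 / 2) = 1 := by
  have h : ∫ t : ℝ, Real.exp (-(1/2) * t ^ 2) = Real.sqrt (π / (1/2)) :=
    integral_gaussian (1/2)
  have h2 : (fun t : ℝ => (Real.sqrt (2 * π))⁻¹ * Real.exp (-t ^ 2 / 2))
      = fun t : ℝ => (Real.sqrt (2 * π))⁻¹ * Real.exp (-(1/2) * t ^ 2) := by
    funext t; ring_nf
  rw [h2, integral_const_mul, h]
  rw [show π / (1/2) = 2 * π by ring]
  rw [inv_mul_cancel₀ (by positivity : Real.sqrt (2*π) ≠ 0)]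

lemma vecMulVec_mulVec' {d : ℕ} (p q x : Fin d → ℝ) :
    (Matrix.vecMulVec p q) *ᵥ x = (q ⬝ᵥ x) • p := by
  funext i
  simp [Matrix.mulVec, Matrix.vecMulVec_apply, dotProduct, Finset.mul_sum, mul_comm,
    mul_assoc, mul_left_comm]

lemma dot_mulVec_left {d : ℕ} (A : Matrix (Fin d) (Fin d) ℝ) (x y : Fin d → ℝ) :
    (A *ᵥ x) ⬝ᵥ y = x ⬝ᵥ (Aᵀ *ᵥ y) := by
  simp only [dotProduct, Matrix.mulVec, Matrix.transpose_apply, Finset.sum_mul,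
    Finset.mul_sum]
  rw [Finset.sum_comm]
  exact Finset.sum_congr rfl fun i _ => Finset.sum_congr rfl fun j _ => by ring

lemma dot_mulVec_right {d : ℕ} (A : Matrix (Fin d) (Fin d) ℝ) (x y : Fin d → ℝ) :
    x ⬝ᵥ (A *ᵥ y) = (Aᵀ *ᵥ x) ⬝ᵥ y := by
  rw [dot_mulVec_left, Matrix.transpose_transpose]

lemma integral_matrix_subst {d : ℕ} (B : Matrix (Fin d) (Fin d) ℝ) (hB : B.det ≠ 0)
    {G : (Fin d → ℝ) → ℝ} (hG : Measurable G) :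
    ∫ y, G y = |B.det| * ∫ u, G (B *ᵥ u) := by
  have hcont : Continuous (Matrix.toLin' B) := LinearMap.continuous_on_pi _
  have h1 : ∫ y, G y ∂(Measure.map (Matrix.toLin' B) volume) = ∫ u, G (B *ᵥ u) := by
    rw [integral_map hcont.measurable.aemeasurable
      hG.stronglyMeasurable.aestronglyMeasurable]
    simp [Matrix.toLin'_apply]
  have h2 : ∫ y, G y ∂(Measure.map (Matrix.toLin' B) volume) = |B.det|⁻¹ * ∫ y, G y := by
    rw [Real.map_matrix_volume_pi_eq_smul_volume_pi hB, integral_smul_measure,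
      ENNReal.toReal_ofReal (by positivity), smul_eq_mul, abs_inv]
  have habs : |B.det| ≠ 0 := by simpa using hB
  rw [h1] at h2
  field_simp at h2 ⊢
  linarith [h2]

lemma exists_reflection {d : ℕ} (i0 : Fin d) (v : Fin d → ℝ) (σ : ℝ) (hσ : 0 < σ)
    (hv : v ⬝ᵥ v = σ ^ 2) :
    ∃ Q : Matrix (Fin d) (Fin d) ℝ, Q * Q = 1 ∧ Qᵀ = Q ∧ Q *ᵥ v = σ • (Pi.single i0 1 : Fin d → ℝ) := by
  set e : Fin d → ℝ := Pi.single i0 1 with he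
  have hev : e ⬝ᵥ v = v i0 := by simp [he, dotProduct, Pi.single_apply]
  have hee : e ⬝ᵥ e = 1 := by simp [he, dotProduct, Pi.single_apply]
  by_cases hcase : v = σ • e
  · exact ⟨1, by simp, by simp, by rw [hcase]; simp⟩
  · set p : Fin d → ℝ := e - σ⁻¹ • v with hp
    have hσ' : σ ≠ 0 := ne_of_gt hσ
    have hpv : p ⬝ᵥ v = v i0 - σ := by
      simp only [hp, sub_dotProduct, smul_dotProduct, hev, hv, smul_eq_mul]
      field_simp
    have hvee : v ⬝ᵥ e = v i0 := by rw [dotProduct_comm]; exact hev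
    have hpp : p ⬝ᵥ p = 2 / σ * (σ - v i0) := by
      simp only [hp, sub_dotProduct, dotProduct_sub, smul_dotProduct,
        dotProduct_smul, hev, hee, hv, hvee, smul_eq_mul]
      field_simp
      ring
    have hpne : p ≠ 0 := by
      intro h0
      apply hcase
      have h1 : e = σ⁻¹ • v := by rwa [hp, sub_eq_zero] at h0
      rw [h1, smul_smul, mul_inv_cancel₀ hσ', one_smul]
    have hpppos : 0 < p ⬝ᵥ p := by
      rcases lt_or_eq_of_le (Finset.sum_nonneg fun i _ => mul_self_nonneg (p i)) with h | h
      · exact h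
      · exact absurd (dotProduct_self_eq_zero.mp h.symm) hpne
    set α : ℝ := 2 / (p ⬝ᵥ p) with hα
    have hαpp : α * (p ⬝ᵥ p) = 2 := by
      rw [hα]; field_simp
    set Q : Matrix (Fin d) (Fin d) ℝ := 1 - α • Matrix.vecMulVec p p with hQ
    have hQx : ∀ x, Q *ᵥ x = x - (α * (p ⬝ᵥ x)) • p := by
      intro x
      rw [hQ, Matrix.sub_mulVec, Matrix.one_mulVec, Matrix.smul_mulVec,
        vecMulVec_mulVec', smul_smul]
    have hQT : Qᵀ = Q := by
      rw [hQ, Matrix.transpose_sub, Matrix.transpose_one, Matrix.transpose_smul]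
      congr 1
      ext i j
      simp [Matrix.vecMulVec_apply, mul_comm]
    have hQQ : Q * Q = 1 := by
      apply Matrix.toLin'.injective
      apply LinearMap.ext
      intro x
      simp only [Matrix.toLin'_apply, ← Matrix.mulVec_mulVec, Matrix.one_mulVec]
      rw [hQx, hQx]
      have hpy : p ⬝ᵥ (x - (α * (p ⬝ᵥ x)) • p) = -(p ⬝ᵥ x) := by
        rw [dotProduct_sub, dotProduct_smul, smul_eq_mul, mul_assoc,
          mul_comm (p ⬝ᵥ x) (p ⬝ᵥ p), ← mul_assoc, hαpp]
        ring
      rw [hpy]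
      ext i
      simp only [Pi.sub_apply, Pi.smul_apply, smul_eq_mul]
      ring
    have hQv : Q *ᵥ v = σ • e := by
      rw [hQx, hpv]
      have hcoef : α * (v i0 - σ) = -σ := by
        rw [hα, hpp]
        have hne : σ - v i0 ≠ 0 := by
          intro h
          rw [hpp, h, mul_zero] at hpppos
          exact lt_irrefl 0 hpppos
        field_simp
        ring
      rw [hcoef, hp]
      ext i
      simp only [Pi.sub_apply, Pi.smul_apply, smul_eq_mul, neg_smul, sub_neg_eq_add]
      have : σ * (σ⁻¹ * v i) = v i := by field_simp
      simp only [Pi.add_apply, Pi.neg_apply, Pi.smul_apply, Pi.sub_apply, smul_eq_mul] at *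
      ring_nf
      field_simp
      ring
    exact ⟨Q, hQQ, hQT, hQv⟩

lemma stdNormalCDF_strictMono : StrictMono stdNormalCDF := by
  intro x y hxy
  have hsub : stdNormalCDF y - stdNormalCDF x
      = ∫ t in Set.Ioc x y, (Real.sqrt (2 * π))⁻¹ * Real.exp (-t ^ 2 / 2) := by
    have hu : Set.Iic y = Set.Iic x ∪ Set.Ioc x y := (Set.Iic_union_Ioc_eq_Iic hxy.le).symm
    rw [stdNormalCDF, stdNormalCDF, hu, setIntegral_union (by
        simp [Set.disjoint_left]; intro a ha hxa; linarith) measurableSet_Ioc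
        (psi_integrable.integrableOn) (psi_integrable.integrableOn)]
    ring
  have hpos : 0 < ∫ t in Set.Ioc x y, (Real.sqrt (2 * π))⁻¹ * Real.exp (-t ^ 2 / 2) := by
    rw [← intervalIntegral.integral_of_le (le_of_lt hxy)]
    exact intervalIntegral.intervalIntegral_pos_of_pos_on
      (psi_integrable.intervalIntegrable) (fun t _ => psi_pos t) hxy
  linarith

open scoped MatrixOrder in
lemma cauchy_schwarz_S0 {d : ℕ} (S0 : Matrix (Fin d) (Fin d) ℝ) (hS0 : S0.PosDef)
    (w Δ : Fin d → ℝ) :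
    (w ⬝ᵥ Δ) ^ 2 ≤ (w ⬝ᵥ (S0 *ᵥ w)) * (Δ ⬝ᵥ (S0⁻¹ *ᵥ Δ)) := by
  classical
  have hS0T : S0ᵀ = S0 := by
    have h := hS0.1
    rwa [Matrix.IsHermitian, Matrix.conjTranspose_eq_transpose_of_trivial] at h
  have hdet : S0.det ≠ 0 := ne_of_gt hS0.det_pos
  have hMpos : (S0⁻¹).PosDef := hS0.inv
  set C : Matrix (Fin d) (Fin d) ℝ := CFC.sqrt S0⁻¹ with hCdef
  have hC2 : C * C = S0⁻¹ := CFC.sqrt_mul_sqrt_self _ hMpos.posSemidef.nonneg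
  have hCT : Cᵀ = C := by
    have h := (CFC.sqrt_nonneg S0⁻¹).posSemidef.1
    rwa [Matrix.IsHermitian, Matrix.conjTranspose_eq_transpose_of_trivial] at h
  have hdotC : ∀ x y : Fin d → ℝ, (C *ᵥ x) ⬝ᵥ (C *ᵥ y) = x ⬝ᵥ (S0⁻¹ *ᵥ y) := by
    intro x y
    rw [dot_mulVec_left, hCT, Matrix.mulVec_mulVec, hC2]
  set a : Fin d → ℝ := S0 *ᵥ w with hadef
  have hinv : S0⁻¹ *ᵥ (S0 *ᵥ w) = w := by
    rw [Matrix.mulVec_mulVec, Matrix.nonsing_inv_mul _ (Ne.isUnit hdet), Matrix.one_mulVec]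
  have key1 : a ⬝ᵥ (S0⁻¹ *ᵥ a) = w ⬝ᵥ (S0 *ᵥ w) := by
    rw [hadef, hinv, dot_mulVec_left, hS0T]
  have key2 : a ⬝ᵥ (S0⁻¹ *ᵥ Δ) = w ⬝ᵥ Δ := by
    rw [hadef, dot_mulVec_left, hS0T, Matrix.mulVec_mulVec,
      Matrix.mul_nonsing_inv _ (Ne.isUnit hdet), Matrix.one_mulVec]
  have hcs := Finset.sum_mul_sq_le_sq_mul_sq Finset.univ (C *ᵥ a) (C *ᵥ Δ)
  have e1 : ∑ i, (C *ᵥ a) i * (C *ᵥ Δ) i = w ⬝ᵥ Δ := by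
    rw [show ∑ i, (C *ᵥ a) i * (C *ᵥ Δ) i = (C *ᵥ a) ⬝ᵥ (C *ᵥ Δ) from rfl, hdotC, key2]
  have e2 : ∑ i, (C *ᵥ a) i ^ 2 = w ⬝ᵥ (S0 *ᵥ w) := by
    rw [show ∑ i, (C *ᵥ a) i ^ 2 = (C *ᵥ a) ⬝ᵥ (C *ᵥ a) from by
      simp [dotProduct, sq], hdotC, key1]
  have e3 : ∑ i, (C *ᵥ Δ) i ^ 2 = Δ ⬝ᵥ (S0⁻¹ *ᵥ Δ) := by
    rw [show ∑ i, (C *ᵥ Δ) i ^ 2 = (C *ᵥ Δ) ⬝ᵥ (C *ᵥ Δ) from by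
      simp [dotProduct, sq], hdotC]
  rw [e1, e2, e3] at hcs
  exact hcs

open scoped MatrixOrder in
lemma gauss_halfspace {d : ℕ} (m : Fin d → ℝ) (S0 : Matrix (Fin d) (Fin d) ℝ)
    (hS0 : S0.PosDef) (w : Fin d → ℝ) (hw : w ≠ 0) (T : ℝ) :
    ∫ s in {s : Fin d → ℝ | w ⬝ᵥ s ≤ T}, gaussDensity m S0 s
      = stdNormalCDF ((T - w ⬝ᵥ m) / Real.sqrt (w ⬝ᵥ (S0 *ᵥ w))) := by
  classical
  -- dimension positive
  have hd : 0 < d := by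
    rcases Nat.eq_zero_or_pos d with h | h
    · exact absurd (by subst h; exact funext fun i => i.elim0) hw
    · exact h
  set i0 : Fin d := ⟨0, hd⟩
  -- basic constants
  have hσ2 : 0 < w ⬝ᵥ (S0 *ᵥ w) := by
    have := hS0.dotProduct_mulVec_pos hw
    simpa using this
  set σ : ℝ := Real.sqrt (w ⬝ᵥ (S0 *ᵥ w)) with hσdef
  have hσ : 0 < σ := Real.sqrt_pos.mpr hσ2
  set c : ℝ := T - w ⬝ᵥ m with hcdef
  -- square root of S0
  set B : Matrix (Fin d) (Fin d) ℝ := CFC.sqrt S0 with hBdef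
  have hB2 : B * B = S0 := CFC.sqrt_mul_sqrt_self _ hS0.posSemidef.nonneg
  have hBsym : Bᵀ = B := by
    have h := (CFC.sqrt_nonneg S0).posSemidef.1
    rwa [Matrix.IsHermitian, Matrix.conjTranspose_eq_transpose_of_trivial] at h
  have hdetS0 : 0 < S0.det := hS0.det_pos
  have hdetB2 : B.det * B.det = S0.det := by rw [← Matrix.det_mul, hB2]
  have hdetB : B.det ≠ 0 := by
    intro h; rw [h, mul_zero] at hdetB2; exact (ne_of_gt hdetS0) hdetB2.symm
  have habsdetB : |B.det| = Real.sqrt S0.det := by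
    rw [← hdetB2, Real.sqrt_mul_self_eq_abs]
  -- B * S0⁻¹ * B = 1
  have hBinv : B * S0⁻¹ * B = 1 := by
    have hS0inv : S0⁻¹ = B⁻¹ * B⁻¹ := by rw [← hB2, Matrix.mul_inv_rev]
    rw [hS0inv, ← Matrix.mul_assoc, Matrix.mul_nonsing_inv _ (Ne.isUnit hdetB), Matrix.one_mul,
      Matrix.nonsing_inv_mul _ (Ne.isUnit hdetB)]
  have hquad : ∀ u : Fin d → ℝ, (B *ᵥ u) ⬝ᵥ (S0⁻¹ *ᵥ (B *ᵥ u)) = u ⬝ᵥ u := by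
    intro u
    rw [dot_mulVec_left, hBsym, Matrix.mulVec_mulVec, Matrix.mulVec_mulVec]
    rw [show B * S0⁻¹ * B = 1 from hBinv, Matrix.one_mulVec]
  set v : Fin d → ℝ := B *ᵥ w with hvdef
  have hvw : ∀ u : Fin d → ℝ, w ⬝ᵥ (B *ᵥ u) = v ⬝ᵥ u := by
    intro u
    rw [dot_mulVec_right, hBsym]
  have hvv : v ⬝ᵥ v = σ ^ 2 := by
    rw [hvdef, dot_mulVec_left, hBsym, Matrix.mulVec_mulVec, hB2, hσdef,
      Real.sq_sqrt hσ2.le]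
  obtain ⟨Q, hQQ, hQT, hQv⟩ := exists_reflection i0 v σ hσ hvv
  have hdetQ2 : Q.det * Q.det = 1 := by rw [← Matrix.det_mul, hQQ, Matrix.det_one]
  have habsdetQ : |Q.det| = 1 := by
    rcases mul_self_eq_one_iff.mp hdetQ2 with h | h <;> simp [h]
  have hdetQ : Q.det ≠ 0 := by
    intro h; rw [h, abs_zero] at habsdetQ; norm_num at habsdetQ
  have hQquad : ∀ x : Fin d → ℝ, (Q *ᵥ x) ⬝ᵥ (Q *ᵥ x) = x ⬝ᵥ x := by
    intro x
    rw [dot_mulVec_left, hQT, Matrix.mulVec_mulVec, hQQ, Matrix.one_mulVec]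
  have hQdot : ∀ x : Fin d → ℝ, v ⬝ᵥ (Q *ᵥ x) = σ * x i0 := by
    intro x
    rw [dot_mulVec_right, hQT, hQv, smul_dotProduct]
    simp [dotProduct, Pi.single_apply]
  -- functions
  set ψ : ℝ → ℝ := fun t => (Real.sqrt (2 * π))⁻¹ * Real.exp (-t ^ 2 / 2) with hψdef
  set K : ℝ := (Real.sqrt ((2 * π) ^ d * S0.det))⁻¹ with hKdef
  set K' : ℝ := (Real.sqrt ((2 * π) ^ d))⁻¹ with hK'def
  have hKK' : |B.det| * K = K' := by
    rw [habsdetB, hKdef, hK'def, Real.sqrt_mul (by positivity), mul_inv]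
    have h1 : Real.sqrt S0.det ≠ 0 := by positivity
    field_simp
  -- continuity and measurability
  have hcontdot : ∀ u : Fin d → ℝ, Continuous fun y : Fin d → ℝ => u ⬝ᵥ y := by
    intro u
    exact Continuous.dotProduct continuous_const continuous_id
  have hgcont : Continuous fun y : Fin d → ℝ => K * Real.exp (-(1/2) * (y ⬝ᵥ (S0⁻¹ *ᵥ y))) := by
    apply Continuous.mul continuous_const
    apply Real.continuous_exp.comp
    apply Continuous.mul continuous_const
    exact Continuous.dotProduct continuous_id
      (Continuous.matrix_mulVec continuous_const continuous_id)

  have hmeas1 : MeasurableSet {y : Fin d → ℝ | w ⬝ᵥ y ≤ c} :=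
    measurableSet_le (hcontdot w).measurable measurable_const
  have hmeas2 : MeasurableSet {u : Fin d → ℝ | v ⬝ᵥ u ≤ c} :=
    measurableSet_le (hcontdot v).measurable measurable_const
  have hmeasA : MeasurableSet {s : Fin d → ℝ | w ⬝ᵥ s ≤ T} :=
    measurableSet_le (hcontdot w).measurable measurable_const
  -- Step 1/2: reduce to centered indicator integral
  have step12 : ∫ s in {s : Fin d → ℝ | w ⬝ᵥ s ≤ T}, gaussDensity m S0 s
      = ∫ y, Set.indicator {y : Fin d → ℝ | w ⬝ᵥ y ≤ c}
          (fun y => K * Real.exp (-(1/2) * (y ⬝ᵥ (S0⁻¹ *ᵥ y)))) y := by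
    rw [← integral_indicator hmeasA]
    rw [← integral_add_right_eq_self
      (fun s => Set.indicator {s : Fin d → ℝ | w ⬝ᵥ s ≤ T} (gaussDensity m S0) s) m]
    congr 1
    funext y
    by_cases hy : y ∈ {y : Fin d → ℝ | w ⬝ᵥ y ≤ c}
    · have hy' : w ⬝ᵥ y ≤ c := hy
      have hmem : (y + m) ∈ {s : Fin d → ℝ | w ⬝ᵥ s ≤ T} := by
        simp only [Set.mem_setOf_eq, dotProduct_add]
        rw [hcdef] at hy'; linarith
      rw [Set.indicator_of_mem hmem, Set.indicator_of_mem hy, gaussDensity,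
        add_sub_cancel_right]
    · have hy' : ¬ (w ⬝ᵥ y ≤ c) := hy
      have hmem : (y + m) ∉ {s : Fin d → ℝ | w ⬝ᵥ s ≤ T} := by
        simp only [Set.mem_setOf_eq, dotProduct_add, not_le]
        rw [not_le] at hy'
        rw [hcdef] at hy'; linarith
      rw [Set.indicator_of_notMem hmem, Set.indicator_of_notMem hy]
  -- Step 3: substitute y = B u
  have hGmeas : Measurable (Set.indicator {y : Fin d → ℝ | w ⬝ᵥ y ≤ c}
      (fun y => K * Real.exp (-(1/2) * (y ⬝ᵥ (S0⁻¹ *ᵥ y))))) :=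
    hgcont.measurable.indicator hmeas1
  have step3 : ∫ y, Set.indicator {y : Fin d → ℝ | w ⬝ᵥ y ≤ c}
        (fun y => K * Real.exp (-(1/2) * (y ⬝ᵥ (S0⁻¹ *ᵥ y)))) y
      = ∫ u, Set.indicator {u : Fin d → ℝ | v ⬝ᵥ u ≤ c}
          (fun u => K' * Real.exp (-(1/2) * (u ⬝ᵥ u))) u := by
    rw [integral_matrix_subst B hdetB hGmeas, ← integral_const_mul]
    congr 1
    funext u
    by_cases hu : u ∈ {u : Fin d → ℝ | v ⬝ᵥ u ≤ c}
    · have hmem : (B *ᵥ u) ∈ {y : Fin d → ℝ | w ⬝ᵥ y ≤ c} := by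
        simp only [Set.mem_setOf_eq]; rw [hvw]; exact hu
      rw [Set.indicator_of_mem hmem, Set.indicator_of_mem hu, hquad, ← mul_assoc, hKK']
    · have hmem : (B *ᵥ u) ∉ {y : Fin d → ℝ | w ⬝ᵥ y ≤ c} := by
        simp only [Set.mem_setOf_eq]; rw [hvw]; exact hu
      rw [Set.indicator_of_notMem hmem, Set.indicator_of_notMem hu, mul_zero]
  -- Step 4: substitute u = Q x
  have hK'gstdcont : Continuous fun u : Fin d → ℝ => K' * Real.exp (-(1/2) * (u ⬝ᵥ u)) := by
    apply Continuous.mul continuous_const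
    apply Real.continuous_exp.comp
    apply Continuous.mul continuous_const
    exact Continuous.dotProduct continuous_id continuous_id
  have hHmeas : Measurable (Set.indicator {u : Fin d → ℝ | v ⬝ᵥ u ≤ c}
      (fun u => K' * Real.exp (-(1/2) * (u ⬝ᵥ u)))) :=
    hK'gstdcont.measurable.indicator hmeas2
  have step4 : ∫ u, Set.indicator {u : Fin d → ℝ | v ⬝ᵥ u ≤ c}
        (fun u => K' * Real.exp (-(1/2) * (u ⬝ᵥ u))) u
      = ∫ x, Set.indicator {x : Fin d → ℝ | x i0 ≤ c / σ}
          (fun x => K' * Real.exp (-(1/2) * (x ⬝ᵥ x))) x := by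
    rw [integral_matrix_subst Q hdetQ hHmeas, habsdetQ, one_mul]
    congr 1
    funext x
    have hiff : v ⬝ᵥ (Q *ᵥ x) ≤ c ↔ x i0 ≤ c / σ := by
      rw [hQdot, mul_comm, ← le_div_iff₀ hσ]
    by_cases hx : x ∈ {x : Fin d → ℝ | x i0 ≤ c / σ}
    · have hmem : (Q *ᵥ x) ∈ {u : Fin d → ℝ | v ⬝ᵥ u ≤ c} := by
        simp only [Set.mem_setOf_eq]; exact hiff.mpr hx
      rw [Set.indicator_of_mem hmem, Set.indicator_of_mem hx, hQquad]
    · have hmem : (Q *ᵥ x) ∉ {u : Fin d → ℝ | v ⬝ᵥ u ≤ c} := by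
        simp only [Set.mem_setOf_eq]; exact fun h => hx (hiff.mp h)
      rw [Set.indicator_of_notMem hmem, Set.indicator_of_notMem hx]
  -- Step 5: Fubini
  have hsqrtpow : Real.sqrt ((2 * π) ^ d) = Real.sqrt (2 * π) ^ d := by
    rw [Real.sqrt_eq_iff_mul_self_eq (by positivity) (by positivity), ← mul_pow,
      Real.mul_self_sqrt (by positivity)]
  have hψprod : ∀ x : Fin d → ℝ, ∏ i, ψ (x i) = K' * Real.exp (-(1/2) * (x ⬝ᵥ x)) := by
    intro x
    rw [hψdef]
    rw [Finset.prod_mul_distrib, Finset.prod_const, ← Real.exp_sum, hK'def, hsqrtpow,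
      ← inv_pow, Finset.card_univ, Fintype.card_fin]
    congr 1
    apply congrArg Real.exp
    rw [dotProduct, Finset.mul_sum]
    exact Finset.sum_congr rfl fun i _ => by ring
  set f : Fin d → ℝ → ℝ :=
    Function.update (fun _ => ψ) i0 ((Set.Iic (c / σ)).indicator ψ) with hfdef
  have hfi0 : f i0 = (Set.Iic (c / σ)).indicator ψ := Function.update_self _ _ _
  have hfne : ∀ i, i ≠ i0 → f i = ψ := fun i hi => Function.update_of_ne hi _ _
  have hprodpt : ∀ x : Fin d → ℝ, Set.indicator {x : Fin d → ℝ | x i0 ≤ c / σ}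
      (fun x => K' * Real.exp (-(1/2) * (x ⬝ᵥ x))) x = ∏ i, f i (x i) := by
    intro x
    by_cases hx : x ∈ {x : Fin d → ℝ | x i0 ≤ c / σ}
    · rw [Set.indicator_of_mem hx, ← hψprod]
      apply Finset.prod_congr rfl
      intro i _
      by_cases hi : i = i0
      · subst hi
        rw [hfi0, Set.indicator_of_mem (Set.mem_Iic.mpr (by exact hx))]
      · rw [hfne i hi]
    · rw [Set.indicator_of_notMem hx]
      symm
      apply Finset.prod_eq_zero (Finset.mem_univ i0)
      rw [hfi0]
      have hxn : x i0 ∉ Set.Iic (c / σ) := fun h => hx (Set.mem_Iic.mp h)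
      exact Set.indicator_of_notMem hxn ψ
  have step5 : ∫ x, Set.indicator {x : Fin d → ℝ | x i0 ≤ c / σ}
        (fun x => K' * Real.exp (-(1/2) * (x ⬝ᵥ x))) x = stdNormalCDF (c / σ) := by
    have : ∫ x : Fin d → ℝ, Set.indicator {x : Fin d → ℝ | x i0 ≤ c / σ}
        (fun x => K' * Real.exp (-(1/2) * (x ⬝ᵥ x))) x = ∫ x : Fin d → ℝ, ∏ i, f i (x i) := by
      congr 1; funext x; exact hprodpt x
    rw [this, MeasureTheory.integral_fintype_prod_volume_eq_prod f]
    rw [Finset.prod_eq_single i0 ?_ ?_]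
    · rw [hfi0, integral_indicator measurableSet_Iic, stdNormalCDF]
    · intro b _ hb
      rw [hfne b hb]
      exact psi_integral
    · intro h; exact absurd (Finset.mem_univ i0) h
  rw [step12, step3, step4, step5]

/-- optimal mean shift for resolving a half-space under a Gaussian
posterior family with fixed covariance.  Here `z = Φ⁻¹(1-ε)`. -/
theorem halfspace_optimal_mean_shift {d : ℕ}
    (μ₀ : Fin d → ℝ) (S0 : Matrix (Fin d) (Fin d) ℝ) (hS0 : S0.PosDef)
    (w : Fin d → ℝ) (hw : w ≠ 0) (T : ℝ)
    (ε : ℝ) (hε0 : 0 < ε) (hε : ε < 1 / 2)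
    (z : ℝ) (hz : stdNormalCDF z = 1 - ε)
    (δ₀ : ℝ) (hδ₀ : δ₀ = (T - w ⬝ᵥ μ₀) / Real.sqrt (w ⬝ᵥ (S0 *ᵥ w)))
    (hfar : δ₀ < z)
    (Δstar : Fin d → ℝ)
    (hΔstar : Δstar = (-(z - δ₀) / Real.sqrt (w ⬝ᵥ (S0 *ᵥ w))) • (S0 *ᵥ w)) :
    IsLeast {x : ℝ | ∃ Δ : Fin d → ℝ,
        (1 - ε ≤ ∫ s in {s : Fin d → ℝ | w ⬝ᵥ s ≤ T}, gaussDensity (μ₀ + Δ) S0 s) ∧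
        x = (1 / 2) * (Δ ⬝ᵥ (S0⁻¹ *ᵥ Δ))}
      ((1 / 2) * (z - δ₀) ^ 2) ∧
    (1 - ε ≤ ∫ s in {s : Fin d → ℝ | w ⬝ᵥ s ≤ T}, gaussDensity (μ₀ + Δstar) S0 s) ∧
    (1 / 2) * (Δstar ⬝ᵥ (S0⁻¹ *ᵥ Δstar)) = (1 / 2) * (z - δ₀) ^ 2 := by
  have hσ2 : 0 < w ⬝ᵥ (S0 *ᵥ w) := by simpa using hS0.dotProduct_mulVec_pos hw
  have hint : ∀ Δ : Fin d → ℝ, ∫ s in {s : Fin d → ℝ | w ⬝ᵥ s ≤ T}, gaussDensity (μ₀ + Δ) S0 s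
      = stdNormalCDF ((T - w ⬝ᵥ (μ₀ + Δ)) / Real.sqrt (w ⬝ᵥ (S0 *ᵥ w))) :=
    fun Δ => gauss_halfspace (μ₀ + Δ) S0 hS0 w hw T
  set σ : ℝ := Real.sqrt (w ⬝ᵥ (S0 *ᵥ w)) with hσdef
  have hσ : 0 < σ := Real.sqrt_pos.mpr hσ2
  have hσne : σ ≠ 0 := ne_of_gt hσ
  have hσsq : σ ^ 2 = w ⬝ᵥ (S0 *ᵥ w) := Real.sq_sqrt hσ2.le
  have hS0T : S0ᵀ = S0 := by
    have h := hS0.1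
    rwa [Matrix.IsHermitian, Matrix.conjTranspose_eq_transpose_of_trivial] at h
  have hdet : S0.det ≠ 0 := ne_of_gt hS0.det_pos
  have hinv : S0⁻¹ *ᵥ (S0 *ᵥ w) = w := by
    rw [Matrix.mulVec_mulVec, Matrix.nonsing_inv_mul _ (Ne.isUnit hdet), Matrix.one_mulVec]
  have hTμ : T - w ⬝ᵥ μ₀ = δ₀ * σ := by
    rw [hδ₀]; field_simp
  have hwΔstar : w ⬝ᵥ Δstar = -(z - δ₀) * σ := by
    rw [hΔstar, dotProduct_smul, smul_eq_mul, ← hσsq]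
    field_simp
  have hargstar : (T - w ⬝ᵥ (μ₀ + Δstar)) / σ = z := by
    rw [dotProduct_add]
    have h1 : T - (w ⬝ᵥ μ₀ + w ⬝ᵥ Δstar) = z * σ := by
      linear_combination hTμ - hwΔstar
    rw [h1]
    field_simp
  have hfeasstar : 1 - ε ≤ ∫ s in {s : Fin d → ℝ | w ⬝ᵥ s ≤ T},
      gaussDensity (μ₀ + Δstar) S0 s := by
    rw [hint Δstar, hargstar, hz]
  have hKLstar : Δstar ⬝ᵥ (S0⁻¹ *ᵥ Δstar) = (z - δ₀) ^ 2 := by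
    rw [hΔstar, Matrix.mulVec_smul, hinv, smul_dotProduct, dotProduct_smul,
      dot_mulVec_left, hS0T, smul_eq_mul, smul_eq_mul, ← hσsq]
    field_simp
  refine ⟨⟨⟨Δstar, hfeasstar, by rw [hKLstar]⟩, ?_⟩, hfeasstar, by rw [hKLstar]⟩
  rintro x ⟨Δ, hfeas, rfl⟩
  have harg : z ≤ (T - w ⬝ᵥ (μ₀ + Δ)) / σ := by
    by_contra hlt
    push_neg at hlt
    have hmon := stdNormalCDF_strictMono hlt
    rw [hz, hint Δ] at *
    linarith
  have hwΔ : w ⬝ᵥ Δ ≤ -(z - δ₀) * σ := by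
    rw [dotProduct_add] at harg
    have h2 : z * σ ≤ T - (w ⬝ᵥ μ₀ + w ⬝ᵥ Δ) := by
      have := (le_div_iff₀ hσ).mp harg
      linarith
    nlinarith [hTμ]
  have hzd : 0 < z - δ₀ := sub_pos.mpr hfar
  have hsq : ((z - δ₀) * σ) ^ 2 ≤ (w ⬝ᵥ Δ) ^ 2 := by
    have h1 : 0 ≤ (z - δ₀) * σ := by positivity
    have h2 : (z - δ₀) * σ ≤ -(w ⬝ᵥ Δ) := by linarith
    calc ((z - δ₀) * σ) ^ 2 ≤ (-(w ⬝ᵥ Δ)) ^ 2 := by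
          exact pow_le_pow_left₀ h1 h2 2
      _ = (w ⬝ᵥ Δ) ^ 2 := neg_sq _
  have hcs := cauchy_schwarz_S0 S0 hS0 w Δ
  have h3 : (w ⬝ᵥ (S0 *ᵥ w)) * (z - δ₀) ^ 2 ≤ (w ⬝ᵥ (S0 *ᵥ w)) * (Δ ⬝ᵥ (S0⁻¹ *ᵥ Δ)) := by
    nlinarith [hsq, hcs, hσsq]
  have hq : (z - δ₀) ^ 2 ≤ Δ ⬝ᵥ (S0⁻¹ *ᵥ Δ) := le_of_mul_le_mul_left h3 hσ2
  linarith
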